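/- arXiv:1901.09392 — 2 statements merged into one kernel-verified Lean document; each statement's English description precedes it below -/
import Mathlib

section
/- Let k: ℝ^d × ℝ^d → ℝ≥0 be a kernel such that for each x, z ↦ k(x, z) is a probability density, and suppose k is translation invariant: k(x + u, z + u) = k(x, z) for all u. Define the smoothed explanation Φ_k(x) = ∫ Φ(z) k(x, z) dz. Then for any r > 0, SENS_MAX(Φ_k, x, r) ≤ ∫ SENS_MAX(Φ, z, r) k(x, z) dz, where SENS_MAX(Φ, x, r) = sup_{‖u‖ ≤ r} ‖Φ(x + u) − Φ(x)‖. -/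
open MeasureTheory

theorem stmt6 {d : ℕ} {F : Type*} [NormedAddCommGroup F] [NormedSpace ℝ F]
    [CompleteSpace F]
    (k : (Fin d → ℝ) → (Fin d → ℝ) → ℝ)
    (hk0 : ∀ x z, 0 ≤ k x z)
    (hk1 : ∀ x, ∫ z, k x z = 1)
    (hkm : ∀ x, Measurable (k x))
    (hkint : ∀ x, Integrable (fun z => k x z) volume)
    (hktrans : ∀ x z u, k (x + u) (z + u) = k x z)
    (Φ : (Fin d → ℝ) → F) (B : ℝ) (hB : ∀ z, ‖Φ z‖ ≤ B)
    (hΦm : StronglyMeasurable Φ)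
    (x : Fin d → ℝ) (r : ℝ) (hr : 0 ≤ r)
    (S : (Fin d → ℝ) → ℝ)
    (hS : ∀ z, S z = sSup {y | ∃ u : Fin d → ℝ, ‖u‖ ≤ r ∧ y = ‖Φ (z + u) - Φ z‖})
    (hSint : Integrable (fun z => S z * k x z) volume)
    (Φk : (Fin d → ℝ) → F) (hΦk : ∀ y, Φk y = ∫ z, k y z • Φ z) :
    sSup {y | ∃ u : Fin d → ℝ, ‖u‖ ≤ r ∧ y = ‖Φk (x + u) - Φk x‖} ≤
      ∫ z, S z * k x z := by
  -- basic facts about S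
  have hbdd : ∀ z, BddAbove {y | ∃ u : Fin d → ℝ, ‖u‖ ≤ r ∧ y = ‖Φ (z + u) - Φ z‖} := by
    intro z
    refine ⟨B + B, ?_⟩
    rintro y ⟨u, hu, rfl⟩
    calc ‖Φ (z + u) - Φ z‖ ≤ ‖Φ (z + u)‖ + ‖Φ z‖ := norm_sub_le _ _
      _ ≤ B + B := add_le_add (hB _) (hB _)
  have hSle : ∀ z (u : Fin d → ℝ), ‖u‖ ≤ r → ‖Φ (z + u) - Φ z‖ ≤ S z := by
    intro z u hu
    rw [hS]
    exact le_csSup (hbdd z) ⟨u, hu, rfl⟩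
  have hS0 : ∀ z, 0 ≤ S z := by
    intro z
    have := hSle z 0 (by simpa using hr)
    simpa using le_trans (norm_nonneg _) this
  -- integrability lemmas
  have hint : ∀ u : Fin d → ℝ, Integrable (fun z => k x z • Φ (z + u)) volume := by
    intro u
    refine Integrable.mono ((hkint x).mul_const B) ?_ ?_
    · exact ((hkm x).stronglyMeasurable.smul
        (hΦm.comp_measurable (measurable_id.add_const u))).aestronglyMeasurable
    · filter_upwards with z
      rw [norm_smul, Real.norm_of_nonneg (hk0 x z)]
      have : k x z * ‖Φ (z + u)‖ ≤ k x z * B := by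
        exact mul_le_mul_of_nonneg_left (hB _) (hk0 x z)
      calc k x z * ‖Φ (z + u)‖ ≤ k x z * B := this
        _ ≤ ‖k x z * B‖ := le_abs_self _
  have hint0 : Integrable (fun z => k x z • Φ z) volume := by
    simpa using hint 0
  refine Real.sSup_le ?_ ?_
  · rintro y ⟨u, hu, rfl⟩
    -- rewrite Φk (x + u) via translation
    have h1 : Φk (x + u) = ∫ z, k x z • Φ (z + u) := by
      rw [hΦk]
      rw [← integral_add_right_eq_self (fun z => k (x + u) z • Φ z) u]
      simp only [hktrans]
    have h2 : Φk (x + u) - Φk x = ∫ z, k x z • (Φ (z + u) - Φ z) := by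
      rw [h1, hΦk, ← integral_sub (hint u) hint0]
      simp [smul_sub]
    rw [h2]
    calc ‖∫ z, k x z • (Φ (z + u) - Φ z)‖
        ≤ ∫ z, ‖k x z • (Φ (z + u) - Φ z)‖ := norm_integral_le_integral_norm _
      _ ≤ ∫ z, S z * k x z := by
          refine integral_mono (by simpa [smul_sub] using ((hint u).sub hint0).norm) hSint ?_
          intro z
          show ‖k x z • (Φ (z + u) - Φ z)‖ ≤ S z * k x z
          rw [norm_smul, Real.norm_of_nonneg (hk0 x z), mul_comm]
          exact mul_le_mul_of_nonneg_right (hSle z u hu) (hk0 x z)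
  · exact integral_nonneg fun z => mul_nonneg (hS0 z) (hk0 x z)
end

section
/- (Robust infidelity lower bound.) Let f: ℝ^d → ℝ, Φ: ℝ^d → ℝ^d, and let I ∈ ℝ^d be a fixed perturbation vector. Define RINFD = sup_{‖u‖ ≤ r} (Iᵀ Φ(x + u) − (f(x + u) − f(x + u − I)))², A = sup_{‖u‖ ≤ r} |Iᵀ Φ(x + u) − Iᵀ Φ(x)|, and B(y) = sup_{‖u‖ ≤ r} |f(y + u) − f(y)|. Then RINFD ≥ ((A − B(x) − B(x − I))/2)², provided A ≥ B(x) + B(x − I). -/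
theorem stmt9 {d : ℕ} (f : (Fin d → ℝ) → ℝ) (Φ : (Fin d → ℝ) → (Fin d → ℝ))
    (x I : Fin d → ℝ) (r : ℝ) (hr : 0 ≤ r)
    (RINFD A : ℝ) (Bf : (Fin d → ℝ) → ℝ)
    (hR : RINFD = sSup {y | ∃ u : Fin d → ℝ, ‖u‖ ≤ r ∧
      y = ((∑ j, I j * Φ (x + u) j) - (f (x + u) - f (x + u - I))) ^ 2})
    (hA : A = sSup {y | ∃ u : Fin d → ℝ, ‖u‖ ≤ r ∧
      y = |(∑ j, I j * Φ (x + u) j) - ∑ j, I j * Φ x j|})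
    (hBddA : BddAbove {y | ∃ u : Fin d → ℝ, ‖u‖ ≤ r ∧
      y = |(∑ j, I j * Φ (x + u) j) - ∑ j, I j * Φ x j|})
    (hBf : ∀ w, Bf w = sSup {y | ∃ u : Fin d → ℝ, ‖u‖ ≤ r ∧ y = |f (w + u) - f w|})
    (hBddB : ∀ w, BddAbove {y | ∃ u : Fin d → ℝ, ‖u‖ ≤ r ∧ y = |f (w + u) - f w|})
    (hAB : Bf x + Bf (x - I) ≤ A) :
    ((A - Bf x - Bf (x - I)) / 2) ^ 2 ≤ RINFD := by
  have h0r : ‖(0 : Fin d → ℝ)‖ ≤ r := by simpa using hr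
  set ΦI : (Fin d → ℝ) → ℝ := fun y => ∑ j, I j * Φ y j with hΦI
  set g : (Fin d → ℝ) → ℝ := fun u => ΦI (x + u) - (f (x + u) - f (x + u - I)) with hg
  set c : ℝ := ΦI x - (f x - f (x - I)) with hc
  -- basic bounds
  have hBx : ∀ u : Fin d → ℝ, ‖u‖ ≤ r → |f (x + u) - f x| ≤ Bf x := by
    intro u hu
    rw [hBf]
    exact le_csSup (hBddB x) ⟨u, hu, rfl⟩
  have hBx' : ∀ u : Fin d → ℝ, ‖u‖ ≤ r → |f (x + u - I) - f (x - I)| ≤ Bf (x - I) := by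
    intro u hu
    rw [hBf]
    refine le_csSup (hBddB (x - I)) ⟨u, hu, ?_⟩
    have : x - I + u = x + u - I := by abel
    rw [this]
  have hAle : ∀ u : Fin d → ℝ, ‖u‖ ≤ r → |ΦI (x + u) - ΦI x| ≤ A := by
    intro u hu
    rw [hA]
    exact le_csSup hBddA ⟨u, hu, rfl⟩
  have hg0 : g 0 = c := by simp [hg, hc]
  have hBxnn : 0 ≤ Bf x := by simpa using hBx 0 h0r
  have hBx'nn : 0 ≤ Bf (x - I) := by simpa using hBx' 0 h0r
  have hAnn : 0 ≤ A := by simpa using hAle 0 h0r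
  -- decomposition of g u
  have hdec : ∀ u : Fin d → ℝ,
      g u = c + (ΦI (x + u) - ΦI x) - (f (x + u) - f x) + (f (x + u - I) - f (x - I)) := by
    intro u; simp [hg, hc]; ring
  have habs : ∀ u : Fin d → ℝ, ‖u‖ ≤ r →
      |g u| ≤ |c| + A + Bf x + Bf (x - I) := by
    intro u hu
    have h1 : |g u| ≤ |c| + |ΦI (x + u) - ΦI x| + |f (x + u) - f x| + |f (x + u - I) - f (x - I)| := by
      rw [hdec u]
      calc |c + (ΦI (x + u) - ΦI x) - (f (x + u) - f x) + (f (x + u - I) - f (x - I))|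
          ≤ |c + (ΦI (x + u) - ΦI x) - (f (x + u) - f x)| + |f (x + u - I) - f (x - I)| :=
            abs_add_le _ _
        _ ≤ |c + (ΦI (x + u) - ΦI x)| + |f (x + u) - f x| + |f (x + u - I) - f (x - I)| := by
            have := abs_sub (c + (ΦI (x + u) - ΦI x)) (f (x + u) - f x)
            linarith
        _ ≤ |c| + |ΦI (x + u) - ΦI x| + |f (x + u) - f x| + |f (x + u - I) - f (x - I)| := by
            have := abs_add_le c (ΦI (x + u) - ΦI x)
            linarith
    have := hAle u hu; have := hBx u hu; have := hBx' u hu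
    linarith
  -- RINFD set is bounded above
  have hBddR : BddAbove {y | ∃ u : Fin d → ℝ, ‖u‖ ≤ r ∧
      y = ((∑ j, I j * Φ (x + u) j) - (f (x + u) - f (x + u - I))) ^ 2} := by
    refine ⟨(|c| + A + Bf x + Bf (x - I)) ^ 2, ?_⟩
    rintro y ⟨u, hu, rfl⟩
    have h1 : |g u| ≤ |c| + A + Bf x + Bf (x - I) := habs u hu
    have h2 : ((∑ j, I j * Φ (x + u) j) - (f (x + u) - f (x + u - I))) ^ 2 = |g u| ^ 2 := by
      rw [sq_abs]
    rw [h2]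
    have hC : (0:ℝ) ≤ |c| + A + Bf x + Bf (x - I) := by positivity
    nlinarith [abs_nonneg (g u)]
  have hRmem : ∀ u : Fin d → ℝ, ‖u‖ ≤ r → g u ^ 2 ≤ RINFD := by
    intro u hu
    rw [hR]
    exact le_csSup hBddR ⟨u, hu, rfl⟩
  have hRnn : 0 ≤ RINFD := le_trans (sq_nonneg _) (hRmem 0 h0r)
  have hsq : ∀ u : Fin d → ℝ, ‖u‖ ≤ r → |g u| ≤ Real.sqrt RINFD := by
    intro u hu
    have := Real.sqrt_le_sqrt (hRmem u hu)
    rwa [Real.sqrt_sq_eq_abs] at this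
  -- key bound on A
  have hAkey : A ≤ Bf x + Bf (x - I) + 2 * Real.sqrt RINFD := by
    rw [hA]
    refine csSup_le ⟨_, 0, h0r, rfl⟩ ?_
    rintro y ⟨u, hu, rfl⟩
    have hp : ΦI (x + u) - ΦI x = (g u - g 0) + (f (x + u) - f x) - (f (x + u - I) - f (x - I)) := by
      rw [hg0]; rw [hdec u]; ring
    have h1 : |ΦI (x + u) - ΦI x| ≤ |g u| + |g 0| + |f (x + u) - f x| + |f (x + u - I) - f (x - I)| := by
      rw [hp]
      calc |(g u - g 0) + (f (x + u) - f x) - (f (x + u - I) - f (x - I))|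
          ≤ |(g u - g 0) + (f (x + u) - f x)| + |f (x + u - I) - f (x - I)| := abs_sub _ _
        _ ≤ |g u - g 0| + |f (x + u) - f x| + |f (x + u - I) - f (x - I)| := by
            have := abs_add_le (g u - g 0) (f (x + u) - f x)
            linarith
        _ ≤ |g u| + |g 0| + |f (x + u) - f x| + |f (x + u - I) - f (x - I)| := by
            have := abs_sub (g u) (g 0)
            linarith
    have h2 := hsq u hu
    have h3 := hsq 0 h0r
    have h4 := hBx u hu
    have h5 := hBx' u hu
    show |ΦI (x + u) - ΦI x| ≤ _
    linarith
  -- conclude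
  have hhalf : (A - Bf x - Bf (x - I)) / 2 ≤ Real.sqrt RINFD := by linarith
  have hhnn : 0 ≤ (A - Bf x - Bf (x - I)) / 2 := by linarith
  calc ((A - Bf x - Bf (x - I)) / 2) ^ 2 ≤ Real.sqrt RINFD ^ 2 := by
        exact pow_le_pow_left₀ hhnn hhalf 2
    _ = RINFD := Real.sq_sqrt hRnn
end
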